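/- Assume that for every sufficiently large t there is a prime in the interval (t, α·t) for every fixed α > 1 (a consequence of the Prime Number Theorem). Then for every nonzero real y there exists t₀ > 0 such that for all t ≥ t₀ there is a prime p with t < p < e^{π/|y|}·t and |p^{-iy} - 1| > 1/√2. -/

import Mathlib

open Real

/-- Chain lemma: starting from a prime `p` with angle `y * log p < B`, repeatedly
take next primes with small angle increments until the angle lands in `[B, B + ε)`. -/
lemma prime_chain (y : ℝ) (hy : 0 < y) (ε : ℝ) (hε : 0 < ε) (T : ℝ)
    (hP : ∀ t ≥ T, ∃ p : ℕ, p.Prime ∧ t < p ∧ (p : ℝ) < Real.exp (ε / y) * t)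
    (B : ℝ) :
    ∀ n : ℕ, ∀ p : ℕ, ⌈Real.exp (B / y)⌉₊ - p ≤ n → p.Prime → T ≤ (p : ℝ) →
      y * Real.log p < B →
      ∃ q : ℕ, q.Prime ∧ p ≤ q ∧ B ≤ y * Real.log q ∧ y * Real.log q < B + ε := by
  intro n
  induction n with
  | zero =>
    intro p hm hp hTp hB
    exfalso
    have hp0 : (0 : ℝ) < p := by exact_mod_cast hp.pos
    have h1 : Real.log p < B / y := by
      rw [lt_div_iff₀ hy] at *
      linarith [hB]
    have h2 : (p : ℝ) < Real.exp (B / y) := by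
      calc (p : ℝ) = Real.exp (Real.log p) := (Real.exp_log hp0).symm
        _ < _ := Real.exp_lt_exp.2 h1
    have h3 : p < ⌈Real.exp (B / y)⌉₊ := by
      have := h2.trans_le (Nat.le_ceil _)
      exact_mod_cast this
    omega
  | succ n ih =>
    intro p hm hp hTp hB
    obtain ⟨q, hq, hpq, hqub⟩ := hP p hTp
    have hpq' : p < q := by exact_mod_cast hpq
    have hq0 : (0 : ℝ) < q := by exact_mod_cast hq.pos
    have hp0 : (0 : ℝ) < p := by exact_mod_cast hp.pos
    have hlogq : Real.log q < ε / y + Real.log p := by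
      have h := Real.log_lt_log hq0 hqub
      rwa [Real.log_mul (Real.exp_ne_zero _) (ne_of_gt hp0), Real.log_exp] at h
    have hyq : y * Real.log q < y * Real.log p + ε := by
      have := mul_lt_mul_of_pos_left hlogq hy
      rw [mul_add] at this
      rw [mul_div_cancel₀ _ (ne_of_gt hy)] at this
      linarith
    by_cases hc : B ≤ y * Real.log q
    · exact ⟨q, hq, hpq'.le, hc, by linarith⟩
    · push_neg at hc
      have h1 : Real.log p < B / y := by
        rw [lt_div_iff₀ hy]
        linarith [hB]
      have h2 : (p : ℝ) < Real.exp (B / y) := by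
        calc (p : ℝ) = Real.exp (Real.log p) := (Real.exp_log hp0).symm
          _ < _ := Real.exp_lt_exp.2 h1
      have h3 : p < ⌈Real.exp (B / y)⌉₊ := by
        have := h2.trans_le (Nat.le_ceil _)
        exact_mod_cast this
      have hm' : ⌈Real.exp (B / y)⌉₊ - q ≤ n := by omega
      obtain ⟨r, hr, hqr, hr1, hr2⟩ := ih q hm' hq (hTp.trans (by exact_mod_cast hpq'.le)) hc
      exact ⟨r, hr, hpq'.le.trans hqr, hr1, hr2⟩

lemma cos_helper (x : ℝ) (h1 : π / 4 ≤ x) (h2 : x ≤ 2 * π - π / 4) :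
    Real.cos x ≤ Real.sqrt 2 / 2 := by
  have hπ := Real.pi_pos
  rcases le_or_gt x π with hx | hx
  · calc Real.cos x ≤ Real.cos (π / 4) :=
          Real.cos_le_cos_of_nonneg_of_le_pi (by positivity) hx h1
      _ = _ := Real.cos_pi_div_four
  · have hcos : Real.cos x = Real.cos (2 * π - x) := (Real.cos_two_pi_sub x).symm
    rw [hcos]
    calc Real.cos (2 * π - x) ≤ Real.cos (π / 4) :=
          Real.cos_le_cos_of_nonneg_of_le_pi (by positivity) (by linarith) (by linarith)
      _ = _ := Real.cos_pi_div_four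

lemma main_pos
    (hPNT : ∀ α : ℝ, 1 < α → ∃ T : ℝ, ∀ t ≥ T, ∃ p : ℕ, p.Prime ∧ t < p ∧ (p : ℝ) < α * t)
    (y : ℝ) (hy : 0 < y) :
    ∃ t₀ > (0 : ℝ), ∀ t ≥ t₀, ∃ p : ℕ, p.Prime ∧ t < p ∧ (p : ℝ) < Real.exp (π / y) * t ∧
      Real.cos (y * Real.log p) ≤ Real.sqrt 2 / 2 := by
  have hπ := Real.pi_pos
  set ε : ℝ := π / 5 with hεdef
  have hε : 0 < ε := by positivity
  have hα : 1 < Real.exp (ε / y) := Real.one_lt_exp_iff.2 (by positivity)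
  obtain ⟨T, hT⟩ := hPNT _ hα
  refine ⟨max T 1, lt_of_lt_of_le one_pos (le_max_right T 1), ?_⟩
  intro t ht
  have htT : T ≤ t := (le_max_left T 1).trans ht
  have ht1 : (1 : ℝ) ≤ t := (le_max_right T 1).trans ht
  have ht0 : (0 : ℝ) < t := lt_of_lt_of_le one_pos ht1
  have hP : ∀ s ≥ max T 1, ∃ p : ℕ, p.Prime ∧ s < p ∧ (p : ℝ) < Real.exp (ε / y) * s :=
    fun s hs => hT s ((le_max_left T 1).trans hs)
  obtain ⟨p₁, hp₁, htp₁, hp₁ub⟩ := hT t htT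
  have hp₁0 : (0 : ℝ) < p₁ := ht0.trans htp₁
  set θ₁ : ℝ := y * Real.log p₁ with hθ₁def
  have hlogp₁ : Real.log p₁ < ε / y + Real.log t := by
    have h := Real.log_lt_log hp₁0 hp₁ub
    rwa [Real.log_mul (Real.exp_ne_zero _) (ne_of_gt ht0), Real.log_exp] at h
  have hθ₁ub : θ₁ < y * Real.log t + ε := by
    have := mul_lt_mul_of_pos_left hlogp₁ hy
    rw [mul_add, mul_div_cancel₀ _ (ne_of_gt hy)] at this
    linarith
  have hθ₁lb : y * Real.log t < θ₁ :=
    mul_lt_mul_of_pos_left (Real.log_lt_log ht0 htp₁) hy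
  set n : ℤ := ⌊(θ₁ - π / 4) / (2 * π)⌋ + 1 with hndef
  have h2π : (0 : ℝ) < 2 * π := by linarith
  have hfl : ((n : ℝ) - 1) * (2 * π) ≤ θ₁ - π / 4 := by
    have h := Int.floor_le ((θ₁ - π / 4) / (2 * π))
    have h' := mul_le_mul_of_nonneg_right h h2π.le
    rw [div_mul_cancel₀ _ (ne_of_gt h2π)] at h'
    push_cast [hndef]
    linarith
  have hfu : θ₁ - π / 4 < (n : ℝ) * (2 * π) := by
    have h := Int.lt_floor_add_one ((θ₁ - π / 4) / (2 * π))
    have h' := mul_lt_mul_of_pos_right h h2π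
    rw [div_mul_cancel₀ _ (ne_of_gt h2π)] at h'
    push_cast [hndef]
    linarith
  have hε5 : ε = π / 5 := hεdef
  clear_value θ₁ n ε
  by_cases hA : θ₁ ≤ (n : ℝ) * (2 * π) - π / 4
  · -- p₁ already has a good angle
    refine ⟨p₁, hp₁, htp₁, ?_, ?_⟩
    · calc (p₁ : ℝ) < Real.exp (ε / y) * t := hp₁ub
        _ ≤ Real.exp (π / y) * t := by
            apply mul_le_mul_of_nonneg_right _ ht0.le
            exact Real.exp_le_exp.2 (by rw [hε5]; gcongr; linarith)
    · have hx1 : π / 4 ≤ θ₁ - ((n : ℝ) - 1) * (2 * π) := by linarith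
      have hx2 : θ₁ - ((n : ℝ) - 1) * (2 * π) ≤ 2 * π - π / 4 := by nlinarith
      have hper : Real.cos θ₁ = Real.cos (θ₁ - ((n : ℝ) - 1) * (2 * π)) := by
        have := Real.cos_add_int_mul_two_pi (θ₁ - ((n : ℝ) - 1) * (2 * π)) (n - 1)
        push_cast at this
        rw [← this]
        ring_nf
      rw [← hθ₁def, hper]
      exact cos_helper _ hx1 hx2
  · push_neg at hA
    set B : ℝ := (n : ℝ) * (2 * π) + π / 4 with hBdef
    clear_value B
    have hθ₁B : θ₁ < B := by rw [hBdef]; linarith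
    have hTp₁ : max T 1 ≤ (p₁ : ℝ) := ht.trans htp₁.le
    obtain ⟨q, hq, hp₁q, hq1, hq2⟩ :=
      prime_chain y hy ε hε (max T 1) hP B (⌈Real.exp (B / y)⌉₊ - p₁) p₁ le_rfl hp₁ hTp₁ (by rw [← hθ₁def]; exact hθ₁B)
    have htq : t < (q : ℝ) := htp₁.trans_le (by exact_mod_cast hp₁q)
    have hq0 : (0 : ℝ) < q := ht0.trans htq
    have hqub : y * Real.log q < y * Real.log t + π := by
      have hB2 : B + ε ≤ θ₁ + π / 2 + ε := by rw [hBdef]; linarith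
      have hεπ : π / 2 + 2 * ε ≤ π := by rw [hε5]; linarith
      linarith
    refine ⟨q, hq, htq, ?_, ?_⟩
    · have hlq : Real.log q < Real.log t + π / y := by
        have h' : y * Real.log q < y * (Real.log t + π / y) := by
          rw [mul_add, mul_div_cancel₀ _ (ne_of_gt hy)]; linarith
        exact lt_of_mul_lt_mul_left h' hy.le
      calc (q : ℝ) = Real.exp (Real.log q) := (Real.exp_log hq0).symm
        _ < Real.exp (Real.log t + π / y) := Real.exp_lt_exp.2 hlq
        _ = Real.exp (π / y) * t := by
            rw [Real.exp_add, Real.exp_log ht0]; ring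
    · have hx1 : π / 4 ≤ y * Real.log q - (n : ℝ) * (2 * π) := by
        rw [hBdef] at hq1; linarith
      have hx2 : y * Real.log q - (n : ℝ) * (2 * π) ≤ 2 * π - π / 4 := by
        rw [hBdef] at hq2; rw [hε5] at hq2; linarith
      have hper : Real.cos (y * Real.log q)
          = Real.cos (y * Real.log q - (n : ℝ) * (2 * π)) := by
        have := Real.cos_add_int_mul_two_pi (y * Real.log q - (n : ℝ) * (2 * π)) n
        push_cast at this
        rw [← this]
        ring_nf
      rw [hper]
      exact cos_helper _ hx1 hx2

lemma abs_exp_mul_I_sub_one (r : ℝ) (h : Real.cos r < 3 / 4) :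
    1 / Real.sqrt 2 < ‖Complex.exp ((r : ℂ) * Complex.I) - 1‖ := by
  have hsq : ‖Complex.exp ((r : ℂ) * Complex.I) - 1‖ ^ 2
      = 2 - 2 * Real.cos r := by
    rw [Complex.sq_norm, Complex.exp_mul_I, Complex.normSq_apply]
    simp [Complex.cos_ofReal_re, Complex.sin_ofReal_re, Complex.cos_ofReal_im,
      Complex.sin_ofReal_im]
    nlinarith [Real.sin_sq_add_cos_sq r]
  have h0 : (0 : ℝ) ≤ ‖Complex.exp ((r : ℂ) * Complex.I) - 1‖ :=
    norm_nonneg _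
  apply lt_of_pow_lt_pow_left₀ 2 h0
  have h1 : (1 / Real.sqrt 2) ^ 2 = 1 / 2 := by
    rw [div_pow, one_pow, Real.sq_sqrt (by norm_num : (0:ℝ) ≤ 2)]
  rw [h1, hsq]
  linarith

theorem prime_find
    (hPNT : ∀ α : ℝ, 1 < α → ∃ T : ℝ, ∀ t ≥ T, ∃ p : ℕ, p.Prime ∧ t < p ∧ (p : ℝ) < α * t)
    (y : ℝ) (hy : y ≠ 0) :
    ∃ t₀ > (0 : ℝ), ∀ t ≥ t₀, ∃ p : ℕ, p.Prime ∧ t < p ∧ (p : ℝ) < Real.exp (π / |y|) * t ∧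
      1 / Real.sqrt 2 < ‖Complex.exp (-(Complex.I * y) * Real.log p) - 1‖ := by
  obtain ⟨t₀, ht₀, H⟩ := main_pos hPNT |y| (abs_pos.2 hy)
  refine ⟨t₀, ht₀, fun t ht => ?_⟩
  obtain ⟨p, hp, h1, h2, h3⟩ := H t ht
  have hsqrt2 : Real.sqrt 2 / 2 < 3 / 4 := by
    nlinarith [Real.sq_sqrt (show (0:ℝ) ≤ 2 by norm_num), Real.sqrt_nonneg 2]
  have hcos : Real.cos (-(y * Real.log p)) < 3 / 4 := by
    rw [Real.cos_neg]
    rcases abs_choice y with hy' | hy'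
    · rw [hy'] at h3; linarith
    · rw [hy', neg_mul, Real.cos_neg] at h3; linarith
  refine ⟨p, hp, h1, h2, ?_⟩
  have heq : -(Complex.I * (y : ℂ)) * (Real.log p : ℂ)
      = ((-(y * Real.log p) : ℝ) : ℂ) * Complex.I := by push_cast; ring
  rw [heq]
  exact abs_exp_mul_I_sub_one _ hcos
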